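/- In the tilted-span setting with vectors in $\mathcal{H}\oplus\bigoplus_{j=1}^l\mathcal{H}_j$: for $0<\alpha<1$, any unit vector $|v\rangle\in\mathcal{H}$, and any unit vector $|w\rangle$ in the subspace $\sum_{j=1}^l \mathcal{T}_{j,\alpha}(\mathcal{H})$, the inner product satisfies $|\langle v|w\rangle| \le \sqrt{l(1-\alpha)}/\sqrt{l(1-\alpha)+\alpha} \le 1 - \alpha/(3l)$, with the maximum attained by $|w\rangle = \frac{1}{\sqrt{l^2(1-\alpha)+l\alpha}}\big(l\sqrt{1-\alpha}|v\rangle + \sqrt{\alpha}\sum_{j=1}^l \mathcal{T}_j(|v\rangle)\big)$. -/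

import Mathlib

open scoped InnerProductSpace

lemma aux_ineq (L α : ℝ) (hL : 1 ≤ L) (hα0 : 0 < α) (hα1 : α < 1) :
    Real.sqrt (L*(1-α)) / Real.sqrt (L*(1-α)+α) ≤ 1 - α/(3*L) := by
  set t := L*(1-α)+α with hts
  have ht0 : 0 < t := by nlinarith
  have htα : α ≤ t := by nlinarith
  have htL : t ≤ L := by nlinarith
  have hc0 : 0 ≤ 1 - α/(2*t) := by
    rw [sub_nonneg, div_le_one (by linarith)]; linarith
  have hsq : L*(1-α) ≤ (1 - α/(2*t))^2 * t := by
    have h : (1 - α/(2*t))^2 * t = t - α + α^2/(4*t) := by field_simp; ring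
    rw [h]; have : 0 ≤ α^2/(4*t) := by positivity
    linarith
  have key : Real.sqrt (L*(1-α)) ≤ (1 - α/(2*t)) * Real.sqrt t := by
    calc Real.sqrt (L*(1-α)) ≤ Real.sqrt ((1 - α/(2*t))^2 * t) := Real.sqrt_le_sqrt hsq
    _ = (1 - α/(2*t)) * Real.sqrt t := by
        rw [Real.sqrt_mul (sq_nonneg _), Real.sqrt_sq hc0]
  have hst : 0 < Real.sqrt t := Real.sqrt_pos.mpr ht0
  have h1 : Real.sqrt (L*(1-α)) / Real.sqrt t ≤ 1 - α/(2*t) := by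
    rw [div_le_iff₀ hst]; exact key
  refine h1.trans ?_
  have : α/(3*L) ≤ α/(2*t) :=
    div_le_div_of_nonneg_left hα0.le (by linarith) (by linarith)
  linarith

lemma inner_self_c {E : Type*} [NormedAddCommGroup E] [InnerProductSpace ℂ E] (w : E) :
    (inner ℂ w w : ℂ) = ((‖w‖^2 : ℝ) : ℂ) := by
  exact_mod_cast inner_self_eq_norm_sq_to_K w

lemma norm_sq_of_inner_c {E : Type*} [NormedAddCommGroup E] [InnerProductSpace ℂ E] (w : E)
    (R : ℝ) (h : (inner ℂ w w : ℂ) = (R : ℂ)) : ‖w‖^2 = R := by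
  have h2 := congrArg Complex.re ((inner_self_c w).symm.trans h)
  rwa [Complex.ofReal_re, Complex.ofReal_re] at h2

section
variable {H E : Type*}
    [NormedAddCommGroup H] [InnerProductSpace ℂ H]
    [NormedAddCommGroup E] [InnerProductSpace ℂ E]
    {l : ℕ}
    (emb : H →ₗᵢ[ℂ] E) (T : Fin l → (H →ₗᵢ[ℂ] E))
    (horth1 : ∀ j, ∀ u v : H, (inner ℂ (emb u) (T j v) : ℂ) = 0)
    (horth2 : ∀ i j, i ≠ j → ∀ u v : H, (inner ℂ (T i u) (T j v) : ℂ) = 0)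
    {α : ℝ} (hα0 : 0 < α) (hα1 : α < 1)
    (Tα : Fin l → (H →ₗ[ℂ] E))
    (hTα : ∀ j, Tα j = (Complex.ofReal (Real.sqrt (1 - α))) • emb.toLinearMap
        + (Complex.ofReal (Real.sqrt α)) • (T j).toLinearMap)

include hTα horth1 in
lemma auxA (v : H) (u : Fin l → H) :
    (inner ℂ (emb v) (∑ j, Tα j (u j)) : ℂ)
      = ((Real.sqrt (1-α) : ℝ) : ℂ) * inner ℂ v (∑ j, u j) := by
  rw [inner_sum, inner_sum, Finset.mul_sum]
  refine Finset.sum_congr rfl fun j _ => ?_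
  rw [hTα j]
  simp only [LinearMap.add_apply, LinearMap.smul_apply, LinearIsometry.coe_toLinearMap,
    inner_add_right, inner_smul_right, horth1, mul_zero, add_zero, emb.inner_map_map]

include hTα horth1 horth2 hα0 hα1 in
lemma auxB (u : Fin l → H) :
    ‖∑ j, Tα j (u j)‖^2 = (1-α) * ‖∑ j, u j‖^2 + α * ∑ j, ‖u j‖^2 := by
  have hα1' : (0:ℝ) ≤ 1 - α := by linarith
  set a : ℝ := Real.sqrt (1-α) with ha
  set b : ℝ := Real.sqrt α with hb
  set U : H := ∑ j, u j with hU
  set S : E := ∑ j, T j (u j) with hS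
  have hw : ∑ j, Tα j (u j) = (a:ℂ) • emb U + (b:ℂ) • S := by
    simp only [hTα, LinearMap.add_apply, LinearMap.smul_apply,
      LinearIsometry.coe_toLinearMap, Finset.sum_add_distrib, ← Finset.smul_sum, hU, hS,
      map_sum]
  have hES : (inner ℂ (emb U) S : ℂ) = 0 := by
    rw [hS, inner_sum]; exact Finset.sum_eq_zero fun j _ => horth1 j U (u j)
  have hSE : (inner ℂ S (emb U) : ℂ) = 0 := by
    rw [← inner_conj_symm, hES, map_zero]
  have hSS : (inner ℂ S S : ℂ) = ∑ j, (inner ℂ (u j) (u j) : ℂ) := by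
    rw [hS, inner_sum]
    refine Finset.sum_congr rfl fun j _ => ?_
    rw [sum_inner, Finset.sum_eq_single j]
    · exact (T j).inner_map_map _ _
    · exact fun i _ hij => horth2 i j hij (u i) (u j)
    · simp
  apply norm_sq_of_inner_c
  rw [hw]
  simp only [inner_add_left, inner_add_right, inner_smul_left, inner_smul_right,
    Complex.conj_ofReal, hES, hSE, hSS, mul_zero, add_zero, zero_add,
    emb.inner_map_map, inner_self_c]
  push_cast
  norm_cast
  have ha2 : a * a = 1 - α := Real.mul_self_sqrt hα1'
  have hb2 : b * b = α := Real.mul_self_sqrt hα0.le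
  linear_combination (‖U‖^2) * ha2 + (∑ j, ‖u j‖^2) * hb2

end

/-- The largest overlap of a unit vector `v ∈ H` with the tilted span
`∑ⱼ T_{j,α}(H)`: the maximal inner product is `√(l(1-α))/√(l(1-α)+α) ≤ 1-α/(3l)`,
attained at the explicit vector `w₀`. -/
theorem stmt4 {H E : Type*}
    [NormedAddCommGroup H] [InnerProductSpace ℂ H] [FiniteDimensional ℂ H]
    [NormedAddCommGroup E] [InnerProductSpace ℂ E] [FiniteDimensional ℂ E]
    {l : ℕ} (hl : 0 < l)
    (emb : H →ₗᵢ[ℂ] E) (T : Fin l → (H →ₗᵢ[ℂ] E))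
    (horth1 : ∀ j, ∀ u v : H, (inner ℂ (emb u) (T j v) : ℂ) = 0)
    (horth2 : ∀ i j, i ≠ j → ∀ u v : H, (inner ℂ (T i u) (T j v) : ℂ) = 0)
    (α : ℝ) (hα0 : 0 < α) (hα1 : α < 1)
    (v : H) (hv : ‖v‖ = 1)
    (Tα : Fin l → (H →ₗ[ℂ] E))
    (hTα : ∀ j, Tα j = (Complex.ofReal (Real.sqrt (1 - α))) • emb.toLinearMap
        + (Complex.ofReal (Real.sqrt α)) • (T j).toLinearMap)
    (Wspan : Submodule ℂ E) (hWspan : Wspan = ⨆ j, Submodule.map (Tα j) ⊤)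
    (w₀ : E)
    (hw₀ : w₀ = (Complex.ofReal ((Real.sqrt ((l : ℝ)^2 * (1 - α) + l * α))⁻¹)) •
        ((Complex.ofReal ((l : ℝ) * Real.sqrt (1 - α))) • emb v
          + (Complex.ofReal (Real.sqrt α)) • ∑ j, T j v)) :
    (∀ w ∈ Wspan, ‖w‖ = 1 →
        ‖(inner ℂ (emb v) w : ℂ)‖
          ≤ Real.sqrt ((l : ℝ) * (1 - α)) / Real.sqrt ((l : ℝ) * (1 - α) + α)) ∧
    Real.sqrt ((l : ℝ) * (1 - α)) / Real.sqrt ((l : ℝ) * (1 - α) + α)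
        ≤ 1 - α / (3 * l) ∧
    w₀ ∈ Wspan ∧
    ‖(inner ℂ (emb v) w₀ : ℂ)‖
        = Real.sqrt ((l : ℝ) * (1 - α)) / Real.sqrt ((l : ℝ) * (1 - α) + α) := by
  have hL : (1:ℝ) ≤ (l:ℝ) := by exact_mod_cast hl
  have hl0 : (0:ℝ) < (l:ℝ) := by linarith
  have hα1' : (0:ℝ) ≤ 1 - α := by linarith
  set a : ℝ := Real.sqrt (1-α) with ha
  have ha0 : 0 ≤ a := Real.sqrt_nonneg _
  set t : ℝ := (l:ℝ)*(1-α) + α with hts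
  have ht0 : (0:ℝ) < t := by nlinarith
  have hst : 0 < Real.sqrt t := Real.sqrt_pos.mpr ht0
  have hsl : 0 < Real.sqrt (l:ℝ) := Real.sqrt_pos.mpr hl0
  refine ⟨?_, aux_ineq (l:ℝ) α hL hα0 hα1, ?_, ?_⟩
  · -- part 1 : the bound
    intro w hw hnorm
    rw [hWspan, Submodule.mem_iSup_iff_exists_finsupp] at hw
    obtain ⟨f, hf, hfsum⟩ := hw
    choose u hu1 hu2 using fun j => Submodule.mem_map.mp (hf j)
    have hwsum : w = ∑ j, Tα j (u j) := by
      rw [← hfsum, Finsupp.sum_fintype _ _ (fun _ => rfl)]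
      exact Finset.sum_congr rfl fun j _ => (hu2 j).symm
    set U : H := ∑ j, u j with hU
    have hnormsq : (1:ℝ) = (1-α)*‖U‖^2 + α*∑ j, ‖u j‖^2 := by
      calc (1:ℝ) = ‖w‖^2 := by rw [hnorm]; norm_num
      _ = _ := by rw [hwsum]; exact auxB emb T horth1 horth2 hα0 hα1 Tα hTα u
    have hCS : ‖U‖^2 ≤ (l:ℝ) * ∑ j, ‖u j‖^2 := by
      have h1 : ‖U‖ ≤ ∑ j, ‖u j‖ := norm_sum_le _ _
      have h2 : (∑ j, ‖u j‖)^2 ≤ (l:ℝ) * ∑ j, ‖u j‖^2 := by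
        have h3 := sq_sum_le_card_mul_sum_sq
          (s := (Finset.univ : Finset (Fin l))) (f := fun j => ‖u j‖)
        simpa using h3
      nlinarith [norm_nonneg U, Finset.sum_nonneg
        (fun j (_ : j ∈ Finset.univ) => norm_nonneg (u j))]
    have hU2 : ‖U‖^2 ≤ (l:ℝ)/t := by
      rw [le_div_iff₀ ht0]
      nlinarith [mul_le_mul_of_nonneg_left hCS hα0.le]
    have hUle : ‖U‖ ≤ Real.sqrt ((l:ℝ)/t) := by
      rw [← Real.sqrt_sq (norm_nonneg U)]; exact Real.sqrt_le_sqrt hU2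
    have hinner := auxA emb T horth1 Tα hTα v u
    rw [hwsum, hinner, norm_mul]
    have hna : ‖((a:ℝ):ℂ)‖ = a := by
      rw [Complex.norm_real, Real.norm_of_nonneg ha0]
    rw [hna]
    have hiU : ‖(inner ℂ v U : ℂ)‖ ≤ ‖U‖ := by
      have := norm_inner_le_norm (𝕜 := ℂ) v U
      rwa [hv, one_mul] at this
    have hchain : a * ‖(inner ℂ v U : ℂ)‖ ≤ a * Real.sqrt ((l:ℝ)/t) :=
      mul_le_mul_of_nonneg_left (hiU.trans hUle) ha0
    refine hchain.trans_eq ?_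
    rw [Real.sqrt_mul hl0.le, Real.sqrt_div hl0.le]
    ring
  · -- part 3 : w₀ ∈ Wspan
    set c : ℂ := (Complex.ofReal ((Real.sqrt ((l:ℝ)^2*(1-α) + (l:ℝ)*α))⁻¹)) with hc
    have hkey : w₀ = ∑ j, Tα j (c • v) := by
      rw [hw₀]
      simp only [hTα, LinearMap.add_apply, LinearMap.smul_apply,
        LinearIsometry.coe_toLinearMap, map_smul, Finset.sum_add_distrib,
        Finset.sum_const, Finset.card_univ, Fintype.card_fin, ← Finset.smul_sum]
      push_cast
      module
    rw [hkey, hWspan]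
    exact Submodule.sum_mem _ fun j _ =>
      Submodule.mem_iSup_of_mem j ⟨c • v, trivial, rfl⟩
  · -- part 4 : value at w₀
    have hvv : (inner ℂ (emb v) (emb v) : ℂ) = 1 := by
      rw [emb.inner_map_map, inner_self_c, hv]; norm_num
    have hiw : (inner ℂ (emb v) w₀ : ℂ)
        = (((Real.sqrt ((l:ℝ)^2*(1-α) + (l:ℝ)*α))⁻¹ * ((l:ℝ) * a) : ℝ) : ℂ) := by
      rw [hw₀]
      rw [inner_smul_right, inner_add_right, inner_smul_right, inner_smul_right, hvv,
        inner_sum]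
      rw [Finset.sum_eq_zero fun j _ => horth1 j v v]
      push_cast
      ring
    rw [hiw, Complex.norm_real, Real.norm_of_nonneg (by positivity)]
    have h1 : Real.sqrt ((l:ℝ)^2*(1-α) + (l:ℝ)*α) = Real.sqrt (l:ℝ) * Real.sqrt t := by
      rw [show (l:ℝ)^2*(1-α) + (l:ℝ)*α = (l:ℝ) * t by rw [hts]; ring,
        Real.sqrt_mul hl0.le]
    have h2 : (l:ℝ) * a = Real.sqrt (l:ℝ) * Real.sqrt ((l:ℝ)*(1-α)) := by
      rw [Real.sqrt_mul hl0.le, ← ha]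
      nlinarith [Real.mul_self_sqrt hl0.le]
    rw [h1, h2]
    field_simp
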